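/- Minimizers of the rounding problem in α-coordinates are binary: let Δ ∈ ℝⁿ with Δᵢ ≥ 0 for all i, let εᵢ = Δᵢ − ⌊Δᵢ⌋ ∈ [0,1), and let B ∈ ℤ_{≥0} with ∑ᵢ ⌊Δᵢ⌋ ≤ B. Consider the feasible set F = { α ∈ ℤⁿ : ∑ᵢ |⌊Δᵢ⌋ + αᵢ| ≤ B }. Then for every α ∈ F with α ∉ {0,1}ⁿ there exists α̃ ∈ F with ∑ᵢ(εᵢ − α̃ᵢ)² < ∑ᵢ(εᵢ − αᵢ)². Consequently, every minimizer of α ↦ ∑ᵢ(εᵢ − αᵢ)² over F lies in {0,1}ⁿ, and 0 ∈ F (the all-zero vector is feasible). -/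
import Mathlib

open scoped BigOperators

lemma sum_comp_point {n : ℕ} {M N : Type*} [AddCommGroup N]
    (g : Fin n → M → N) (b : Fin n → M) (j : Fin n) (v : M) :
    ∑ i, g i (if i = j then v else b i) = ∑ i, g i (b i) + (g j v - g j (b j)) := by
  have h1 : ∀ i, g i (if i = j then v else b i)
      = Function.update (fun i => g i (b i)) j (g j v) i := by
    intro i
    by_cases h : i = j
    · subst h; simp
    · simp [Function.update, h]
  rw [Finset.sum_congr rfl fun i _ => h1 i,
    Finset.sum_update_of_mem (Finset.mem_univ j)]
  rw [Finset.sum_eq_sum_sdiff_singleton_add (Finset.mem_univ j) (fun i => g i (b i))]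
  abel

lemma sum_comp_two {n : ℕ} {M N : Type*} [AddCommGroup N]
    (g : Fin n → M → N) (b : Fin n → M) (j k : Fin n) (hjk : j ≠ k) (vj vk : M) :
    ∑ i, g i (if i = j then vj else if i = k then vk else b i)
      = ∑ i, g i (b i) + (g j vj - g j (b j)) + (g k vk - g k (b k)) := by
  have h1 : ∀ i, (if i = j then vj else if i = k then vk else b i)
      = (if i = j then vj else (fun i => if i = k then vk else b i) i) := by
    intro i; rfl
  rw [Finset.sum_congr rfl fun i _ => congrArg (g i) (h1 i),
    sum_comp_point g (fun i => if i = k then vk else b i) j vj,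
    sum_comp_point g b k vk]
  have hj : (if j = k then vk else b j) = b j := by simp [hjk]
  rw [hj]
  abel

theorem rounding_minimizers_binary (n : ℕ)
    (Δ : Fin n → ℝ) (hΔ : ∀ i, 0 ≤ Δ i)
    (ε : Fin n → ℝ) (hε : ∀ i, ε i = Δ i - ⌊Δ i⌋)
    (B : ℤ) (hB : 0 ≤ B) (hsum : ∑ i, ⌊Δ i⌋ ≤ B)
    (F : Set (Fin n → ℤ)) (hF : F = {α | ∑ i, |⌊Δ i⌋ + α i| ≤ B}) :
    (∀ α ∈ F, ¬ (∀ i, α i = 0 ∨ α i = 1) →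
        ∃ α' ∈ F, ∑ i, (ε i - (α' i : ℝ)) ^ 2 < ∑ i, (ε i - (α i : ℝ)) ^ 2) ∧
      (∀ α ∈ F,
        (∀ β ∈ F, ∑ i, (ε i - (α i : ℝ)) ^ 2 ≤ ∑ i, (ε i - (β i : ℝ)) ^ 2) →
        ∀ i, α i = 0 ∨ α i = 1) ∧
      (fun _ : Fin n => (0 : ℤ)) ∈ F := by
  subst hF
  have hm : ∀ i, (0 : ℤ) ≤ ⌊Δ i⌋ := fun i => Int.floor_nonneg.mpr (hΔ i)
  have hε0 : ∀ i, 0 ≤ ε i := by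
    intro i; rw [hε i]
    rw [Int.self_sub_floor]
    exact Int.fract_nonneg _
  have hε1 : ∀ i, ε i < 1 := by
    intro i; rw [hε i]
    rw [Int.self_sub_floor]
    exact Int.fract_lt_one _
  have key : ∀ α ∈ {α : Fin n → ℤ | ∑ i, |⌊Δ i⌋ + α i| ≤ B},
      ¬ (∀ i, α i = 0 ∨ α i = 1) →
      ∃ α' ∈ {α : Fin n → ℤ | ∑ i, |⌊Δ i⌋ + α i| ≤ B},
        ∑ i, (ε i - (α' i : ℝ)) ^ 2 < ∑ i, (ε i - (α i : ℝ)) ^ 2 := by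
    intro α hα hnb
    simp only [Set.mem_setOf_eq] at hα ⊢
    push_neg at hnb
    by_cases hA : ∃ j, 2 ≤ α j
    · -- some coordinate ≥ 2 : decrement it
      obtain ⟨j, hj⟩ := hA
      refine ⟨fun i => if i = j then α j - 1 else α i, ?_, ?_⟩
      · rw [sum_comp_point (fun i x => |⌊Δ i⌋ + x|) α j (α j - 1)]
        have h1 : |⌊Δ j⌋ + (α j - 1)| ≤ |⌊Δ j⌋ + α j| := by
          have := hm j
          rw [abs_of_nonneg (by omega), abs_of_nonneg (by omega)]; omega
        linarith
      · rw [sum_comp_point (fun i (x : ℤ) => (ε i - (x : ℝ)) ^ 2) α j (α j - 1)]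
        have ha : (2 : ℝ) ≤ (α j : ℝ) := by exact_mod_cast hj
        have := hε0 j; have := hε1 j
        have hlt : (ε j - ((α j - 1 : ℤ) : ℝ)) ^ 2 < (ε j - (α j : ℝ)) ^ 2 := by
          push_cast; nlinarith
        linarith
    · push_neg at hA
      have hA' : ∀ i, α i ≤ 1 := fun i => by have := hA i; omega
      obtain ⟨j, hj0, hj1⟩ := hnb
      have hjneg : α j ≤ -1 := by have := hA' j; omega
      by_cases hBcase : ∃ j, ⌊Δ j⌋ + α j ≤ -1
      · -- some term negative : increment that coordinate, |term| drops
        obtain ⟨l, hl⟩ := hBcase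
        have hlneg : α l ≤ -1 := by have := hm l; omega
        refine ⟨fun i => if i = l then α l + 1 else α i, ?_, ?_⟩
        · rw [sum_comp_point (fun i x => |⌊Δ i⌋ + x|) α l (α l + 1)]
          have h1 : |⌊Δ l⌋ + (α l + 1)| ≤ |⌊Δ l⌋ + α l| := by
            rw [abs_of_nonpos (by omega), abs_of_nonpos (by omega)]; omega
          linarith
        · rw [sum_comp_point (fun i (x : ℤ) => (ε i - (x : ℝ)) ^ 2) α l (α l + 1)]
          have ha : (α l : ℝ) ≤ -1 := by exact_mod_cast hlneg
          have := hε0 l; have := hε1 l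
          have hlt : (ε l - ((α l + 1 : ℤ) : ℝ)) ^ 2 < (ε l - (α l : ℝ)) ^ 2 := by
            push_cast; nlinarith
          linarith
      · push_neg at hBcase
        have hpos : ∀ i, 0 ≤ ⌊Δ i⌋ + α i := fun i => by have := hBcase i; omega
        have hSeq : ∑ i, |⌊Δ i⌋ + α i| = ∑ i, ⌊Δ i⌋ + ∑ i, α i := by
          rw [← Finset.sum_add_distrib]
          exact Finset.sum_congr rfl fun i _ => abs_of_nonneg (hpos i)
        by_cases hC : ∑ i, α i ≤ -1
        · -- budget has slack : increment j
          refine ⟨fun i => if i = j then α j + 1 else α i, ?_, ?_⟩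
          · rw [sum_comp_point (fun i x => |⌊Δ i⌋ + x|) α j (α j + 1)]
            have h1 : |⌊Δ j⌋ + (α j + 1)| = |⌊Δ j⌋ + α j| + 1 := by
              rw [abs_of_nonneg (by have := hpos j; omega), abs_of_nonneg (hpos j)]; ring
            rw [h1]
            have : ∑ i, |⌊Δ i⌋ + α i| + 1 ≤ B := by rw [hSeq]; omega
            omega
          · rw [sum_comp_point (fun i (x : ℤ) => (ε i - (x : ℝ)) ^ 2) α j (α j + 1)]
            have ha : (α j : ℝ) ≤ -1 := by exact_mod_cast hjneg
            have := hε0 j; have := hε1 j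
            have hlt : (ε j - ((α j + 1 : ℤ) : ℝ)) ^ 2 < (ε j - (α j : ℝ)) ^ 2 := by
              push_cast; nlinarith
            linarith
        · -- no slack : there is k ≠ j with α k = 1; increment j, zero out k
          push_neg at hC
          have hk : ∃ k, k ≠ j ∧ α k = 1 := by
            by_contra hcon
            push_neg at hcon
            have h1 : ∀ k ∈ Finset.univ.erase j, α k ≤ 0 := by
              intro k hk
              have hne : k ≠ j := (Finset.mem_erase.mp hk).1
              have := hcon k hne
              have := hA' k; omega
            have h2 : ∑ k ∈ Finset.univ.erase j, α k ≤ 0 := Finset.sum_nonpos h1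
            have h3 : α j + ∑ k ∈ Finset.univ.erase j, α k = ∑ i, α i :=
              Finset.add_sum_erase Finset.univ α (Finset.mem_univ j)
            omega
          obtain ⟨k, hkj, hk1⟩ := hk
          refine ⟨fun i => if i = j then α j + 1 else if i = k then 0 else α i, ?_, ?_⟩
          · rw [sum_comp_two (fun i x => |⌊Δ i⌋ + x|) α j k (Ne.symm hkj) (α j + 1) 0]
            have h1 : |⌊Δ j⌋ + (α j + 1)| = |⌊Δ j⌋ + α j| + 1 := by
              rw [abs_of_nonneg (by have := hpos j; omega), abs_of_nonneg (hpos j)]; ring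
            have h2 : |⌊Δ k⌋ + (0 : ℤ)| = |⌊Δ k⌋ + α k| - 1 := by
              rw [abs_of_nonneg (by have := hm k; omega), abs_of_nonneg (hpos k)]
              omega
            rw [h1, h2]
            omega
          · rw [sum_comp_two (fun i (x : ℤ) => (ε i - (x : ℝ)) ^ 2) α j k
              (Ne.symm hkj) (α j + 1) 0]
            have ha : (α j : ℝ) ≤ -1 := by exact_mod_cast hjneg
            have hak : ((α k : ℤ) : ℝ) = 1 := by exact_mod_cast hk1
            have := hε0 j; have := hε1 j; have := hε0 k; have := hε1 k
            have hlt : ((ε j - ((α j + 1 : ℤ) : ℝ)) ^ 2 - (ε j - (α j : ℝ)) ^ 2)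
                + ((ε k - ((0 : ℤ) : ℝ)) ^ 2 - (ε k - (α k : ℝ)) ^ 2) < 0 := by
              push_cast; rw [hak]; nlinarith
            linarith
  refine ⟨key, ?_, ?_⟩
  · intro α hα hmin i
    by_contra hcon
    have hnb : ¬ (∀ i, α i = 0 ∨ α i = 1) := by
      intro h; exact hcon (h i)
    obtain ⟨α', hα', hlt⟩ := key α hα hnb
    have := hmin α' hα'
    linarith
  · simp only [Set.mem_setOf_eq, add_zero]
    calc ∑ i, |⌊Δ i⌋| = ∑ i, ⌊Δ i⌋ :=
          Finset.sum_congr rfl fun i _ => abs_of_nonneg (hm i)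
      _ ≤ B := hsum
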